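/- arXiv:1009.2418 — 3 statements merged into one kernel-verified Lean document; each statement's English description precedes it below -/
import Mathlib

section
/- Let Φ : ℝ → ℂ be a continuous function with Φ(0) = 0 (a Lévy exponent). Define operators on such functions by (𝓘Φ)(y) = ∫_0^∞ Φ(e^{-s} y) ds and (𝓙Φ)(y) = ∫_0^1 Φ(s y) ds, assuming both integrals converge for all y. Then (𝓙Φ)(y) + (𝓘𝓙Φ)(y) = (𝓘Φ)(y) for all y, i.e., 𝓘∘𝓙 = 𝓘 - 𝓙 as operators on Lévy exponents. -/
open MeasureTheory Topology Filter

/-- The random integral mapping `I^{e^{-s},s}_{(0,∞)}` on Lévy exponents: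
`(𝓘Φ)(y) = ∫_0^∞ Φ(e^{-s} y) ds`. -/
noncomputable def Ical (Φ : ℝ → ℂ) : ℝ → ℂ :=
  fun y => ∫ s in Set.Ioi (0 : ℝ), Φ (Real.exp (-s) * y)

/-- The random integral mapping `I^{s,s}_{(0,1)}` on Lévy exponents:
`(𝓙Φ)(y) = ∫_0^1 Φ(s y) ds`. -/
noncomputable def Jcal (Φ : ℝ → ℂ) : ℝ → ℂ :=
  fun y => ∫ s in (0 : ℝ)..1, Φ (s * y)

/-- `𝓙Φ + 𝓘𝓙Φ = 𝓘Φ`, i.e. `𝓘 ∘ 𝓙 = 𝓘 - 𝓙` on Lévy exponents. -/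
theorem Jcal_add_Ical_Jcal (Φ : ℝ → ℂ) (hΦc : Continuous Φ) (hΦ0 : Φ 0 = 0)
    (hI : ∀ y : ℝ, IntegrableOn (fun s => Φ (Real.exp (-s) * y)) (Set.Ioi 0))
    (hJ : ∀ y : ℝ, IntervalIntegrable (fun s => Φ (s * y)) volume 0 1)
    (hIJ : ∀ y : ℝ, IntegrableOn (fun s => Jcal Φ (Real.exp (-s) * y)) (Set.Ioi 0)) :
    ∀ y : ℝ, Jcal Φ y + Ical (Jcal Φ) y = Ical Φ y := by
  intro y
  set g : ℝ → ℂ := fun u => Φ (u * y) with hg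
  have hgc : Continuous g := hΦc.comp (continuous_id.mul continuous_const)
  set G : ℝ → ℂ := fun x => ∫ u in (0:ℝ)..x, g u with hGdef
  have hG : ∀ x : ℝ, HasDerivAt G (g x) x := fun x =>
    intervalIntegral.integral_hasDerivAt_right (hgc.intervalIntegrable _ _)
      (hgc.stronglyMeasurableAtFilter _ _) hgc.continuousAt
  set H : ℝ → ℂ := fun t => Real.exp t • G (Real.exp (-t)) with hHdef
  -- H t = Jcal Φ (e^{-t} y)
  have hHJ : ∀ t : ℝ, Jcal Φ (Real.exp (-t) * y) = H t := by
    intro t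
    have h1 : (fun s : ℝ => Φ (s * (Real.exp (-t) * y))) =
        fun s : ℝ => g (Real.exp (-t) * s) := by
      funext s; simp only [hg]; ring_nf
    have h2 : (∫ s in (0:ℝ)..1, g (Real.exp (-t) * s)) =
        (Real.exp (-t))⁻¹ • ∫ u in (Real.exp (-t) * 0)..(Real.exp (-t) * 1), g u :=
      intervalIntegral.integral_comp_mul_left g (Real.exp_ne_zero (-t))
    simp only [Jcal, h1, h2, mul_zero, mul_one, hHdef, hGdef, ← Real.exp_neg, neg_neg]
  -- derivative of H
  have hH : ∀ t : ℝ, HasDerivAt H (H t - Φ (Real.exp (-t) * y)) t := by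
    intro t
    have d1 : HasDerivAt (fun t : ℝ => Real.exp (-t)) (-Real.exp (-t)) t := by
      simpa [Function.comp_def] using (Real.hasDerivAt_exp (-t)).comp t ((hasDerivAt_id t).neg)
    have d2 : HasDerivAt (fun t : ℝ => G (Real.exp (-t)))
        ((-Real.exp (-t)) • g (Real.exp (-t))) t :=
      by simpa [Function.comp_def] using (hG (Real.exp (-t))).scomp t d1
    have d3 : HasDerivAt H
        (Real.exp t • ((-Real.exp (-t)) • g (Real.exp (-t))) +
          Real.exp t • G (Real.exp (-t))) t :=
      (Real.hasDerivAt_exp t).smul d2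
    have heq : Real.exp t • ((-Real.exp (-t)) • g (Real.exp (-t))) +
        Real.exp t • G (Real.exp (-t)) = H t - Φ (Real.exp (-t) * y) := by
      rw [smul_smul, mul_neg, ← Real.exp_add]
      simp [hHdef, hg, sub_eq_neg_add]
    rwa [heq] at d3
  have hHcont : Continuous H :=
    continuous_iff_continuousAt.2 fun t => (hH t).continuousAt
  have hcont2 : Continuous fun t : ℝ => Φ (Real.exp (-t) * y) :=
    hΦc.comp ((Real.continuous_exp.comp continuous_neg).mul continuous_const)
  -- per-T identity
  have key : ∀ T : ℝ, (∫ t in (0:ℝ)..T, Φ (Real.exp (-t) * y)) + H T =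
      (∫ t in (0:ℝ)..T, H t) + H 0 := by
    intro T
    have ftc : (∫ t in (0:ℝ)..T, (H t - Φ (Real.exp (-t) * y))) = H T - H 0 :=
      intervalIntegral.integral_eq_sub_of_hasDerivAt (fun t _ => hH t)
        ((hHcont.sub hcont2).intervalIntegrable _ _)
    rw [intervalIntegral.integral_sub (hHcont.intervalIntegrable _ _)
      (hcont2.intervalIntegrable _ _)] at ftc
    linear_combination -ftc
  -- H T → 0 as T → ∞
  have hexp0 : Filter.Tendsto (fun t : ℝ => Real.exp (-t)) Filter.atTop
      (nhdsWithin 0 {(0:ℝ)}ᶜ) := by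
    rw [tendsto_nhdsWithin_iff]
    exact ⟨Real.tendsto_exp_neg_atTop_nhds_zero,
      Filter.Eventually.of_forall fun t => Real.exp_ne_zero _⟩
  have hG0 : G 0 = 0 := intervalIntegral.integral_same
  have hslope : Filter.Tendsto (slope G 0) (nhdsWithin 0 {(0:ℝ)}ᶜ) (𝓝 0) := by
    have := hasDerivAt_iff_tendsto_slope.1 (hG 0)
    simpa [hg, hΦ0] using this
  have hHlim : Filter.Tendsto H Filter.atTop (𝓝 0) := by
    have := hslope.comp hexp0
    refine this.congr fun t => ?_
    simp [slope, hG0, hHdef, vsub_eq_sub, Real.exp_neg]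
  -- improper integral limits
  have lim1 : Filter.Tendsto (fun T : ℝ => ∫ t in (0:ℝ)..T, Φ (Real.exp (-t) * y))
      Filter.atTop (𝓝 (Ical Φ y)) :=
    intervalIntegral_tendsto_integral_Ioi 0 (hI y) Filter.tendsto_id
  have hHint : IntegrableOn H (Set.Ioi (0:ℝ)) := by
    have := hIJ y
    refine this.congr_fun (fun t _ => hHJ t) measurableSet_Ioi
  have lim2 : Filter.Tendsto (fun T : ℝ => ∫ t in (0:ℝ)..T, H t)
      Filter.atTop (𝓝 (Ical (Jcal Φ) y)) := by
    have : Ical (Jcal Φ) y = ∫ t in Set.Ioi (0:ℝ), H t :=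
      setIntegral_congr_fun measurableSet_Ioi fun t _ => hHJ t
    rw [this]
    exact intervalIntegral_tendsto_integral_Ioi 0 hHint Filter.tendsto_id
  -- combine
  have hH0 : H 0 = Jcal Φ y := by
    have := hHJ 0
    simpa using this.symm
  have L : Filter.Tendsto (fun T : ℝ => (∫ t in (0:ℝ)..T, Φ (Real.exp (-t) * y)) + H T)
      Filter.atTop (𝓝 (Ical Φ y + 0)) := lim1.add hHlim
  have R : Filter.Tendsto (fun T : ℝ => (∫ t in (0:ℝ)..T, Φ (Real.exp (-t) * y)) + H T)
      Filter.atTop (𝓝 (Ical (Jcal Φ) y + H 0)) := by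
    simp only [key]
    exact lim2.add tendsto_const_nhds
  have := tendsto_nhds_unique L R
  rw [add_zero, hH0] at this
  rw [this, add_comm]
end

section
/- With the operators 𝓘 and 𝓙 acting on Lévy exponents Φ as (𝓘Φ)(y) = ∫_0^∞ Φ(e^{-s}y) ds and (𝓙Φ)(y) = ∫_0^1 Φ(sy) ds (assuming absolute convergence), the identity 𝓙(Φ + 𝓘Φ) = 𝓘Φ holds, i.e., 𝓙(I + 𝓘) = 𝓘. -/
open MeasureTheory

open Set

lemma subst_exp_neg (g : ℝ → ℂ) :
    ∫ s in (0:ℝ)..1, g s = ∫ v in Ioi (0:ℝ), Real.exp (-v) • g (Real.exp (-v)) := by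
  rw [intervalIntegral.integral_of_le (by norm_num : (0:ℝ) ≤ 1), integral_Ioc_eq_integral_Ioo]
  have himg : (fun v => Real.exp (-v)) '' Ioi (0:ℝ) = Ioo 0 1 := by
    ext x
    constructor
    · rintro ⟨v, hv, rfl⟩
      exact ⟨Real.exp_pos _, Real.exp_lt_one_iff.mpr (by simpa using hv)⟩
    · rintro ⟨hx0, hx1⟩
      exact ⟨-Real.log x, by simpa using Real.log_neg hx0 hx1, by simp [Real.exp_log hx0]⟩
  rw [← himg]
  rw [integral_image_eq_integral_abs_deriv_smul measurableSet_Ioi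
    (f' := fun v => -Real.exp (-v))
    (fun v _ => by
      simpa [Function.comp_def] using ((Real.hasDerivAt_exp (-v)).comp v ((hasDerivAt_id v).neg)).hasDerivWithinAt)
    (fun a _ b _ hab => by
      simpa using Real.exp_injective hab) g]
  simp [abs_of_pos (Real.exp_pos _)]

lemma shift_Ioi (h : ℝ → ℂ) (v : ℝ) :
    ∫ s in Ioi (0:ℝ), h (s + v) = ∫ w in Ioi v, h w := by
  have := (measurePreserving_add_right (volume : Measure ℝ) v).setIntegral_preimage_emb
    (MeasurableEquiv.addRight v).measurableEmbedding h (Ioi v)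
  simpa using this

lemma fubini_step (h : ℝ → ℂ) (hc : Continuous h) (hint : IntegrableOn h (Ioi 0)) :
    ∫ v in Ioi (0:ℝ), Real.exp (-v) • ∫ w in Ioi v, h w
      = (∫ w in Ioi (0:ℝ), h w) - ∫ w in Ioi (0:ℝ), Real.exp (-w) • h w := by
  set F : ℝ → ℝ → ℂ := fun v w =>
    (Ioi (0:ℝ)).indicator (fun v => Real.exp (-v)) v • (Ioi v).indicator h w with hF
  have hFmeas : AEStronglyMeasurable (Function.uncurry F) (volume.prod volume) := by
    have heq : Function.uncurry F = fun p : ℝ × ℝ =>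
        (Ioi (0:ℝ)).indicator (fun v => Real.exp (-v)) p.1 •
          {q : ℝ × ℝ | q.1 < q.2}.indicator (fun q => h q.2) p := by
      funext p
      simp only [Function.uncurry, hF, Set.indicator_apply, Set.mem_Ioi, Set.mem_setOf_eq]
    rw [heq]
    exact ((((Real.continuous_exp.comp continuous_neg).measurable.indicator
        measurableSet_Ioi).comp measurable_fst).smul
      ((hc.measurable.comp measurable_snd).indicator
        (measurableSet_lt measurable_fst measurable_snd))).aestronglyMeasurable
  have hslice : ∀ v : ℝ, Integrable (F v) := by
    intro v
    by_cases hv : v ∈ Ioi (0:ℝ)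
    · have h1 : IntegrableOn h (Ioi v) := hint.mono_set (Ioi_subset_Ioi (le_of_lt hv))
      have h2 : F v = fun w => Real.exp (-v) • (Ioi v).indicator h w := by
        funext w
        simp only [hF]
        rw [Set.indicator_of_mem hv]
      rw [h2]
      exact ((integrable_indicator_iff measurableSet_Ioi).mpr h1).smul (Real.exp (-v))
    · have : F v = fun _ => 0 := by
        funext w
        simp [hF, Set.indicator_of_notMem hv]
      rw [this]; exact integrable_zero _ _ _
  set C : ℝ := ∫ w in Ioi (0:ℝ), ‖h w‖ with hC
  have hC0 : 0 ≤ C := setIntegral_nonneg measurableSet_Ioi fun w _ => norm_nonneg _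
  have hFint : Integrable (Function.uncurry F) (volume.prod volume) := by
    refine (integrable_prod_iff hFmeas).mpr ⟨.of_forall hslice, ?_⟩
    have hbd : Integrable ((Ioi (0:ℝ)).indicator fun v => Real.exp (-v) * C) := by
      apply (integrable_indicator_iff measurableSet_Ioi).mpr
      exact ((exp_neg_integrableOn_Ioi 0 one_pos).congr_fun
        (fun x _ => by norm_num) measurableSet_Ioi).mul_const C
    refine Integrable.mono hbd (hFmeas.norm.integral_prod_right') (.of_forall fun v => ?_)
    simp only [Function.uncurry_apply_pair]
    by_cases hv : v ∈ Ioi (0:ℝ)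
    · have hval : (fun w => ‖F v w‖)
          = fun w => Real.exp (-v) * ‖(Ioi v).indicator h w‖ := by
        funext w
        simp only [hF]
        rw [Set.indicator_of_mem hv, norm_smul, Real.norm_eq_abs, Real.abs_exp]
      rw [hval, integral_const_mul]
      have h2 : ∫ w, ‖(Ioi v).indicator h w‖ = ∫ w in Ioi v, ‖h w‖ := by
        rw [← integral_indicator measurableSet_Ioi]
        congr 1
        funext w
        by_cases hw : w ∈ Ioi v <;>
          simp [Set.indicator_of_mem, Set.indicator_of_notMem, hw]
      rw [h2]
      have h3 : ∫ w in Ioi v, ‖h w‖ ≤ C :=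
        setIntegral_mono_set hint.norm (.of_forall fun w => norm_nonneg _)
          (HasSubset.Subset.eventuallyLE (Ioi_subset_Ioi (le_of_lt hv)))
      have h4 : 0 ≤ Real.exp (-v) * ∫ w in Ioi v, ‖h w‖ :=
        mul_nonneg (Real.exp_pos _).le
          (setIntegral_nonneg measurableSet_Ioi fun w _ => norm_nonneg _)
      rw [Real.norm_of_nonneg h4, Set.indicator_of_mem hv,
        Real.norm_of_nonneg (mul_nonneg (Real.exp_pos _).le hC0)]
      exact mul_le_mul_of_nonneg_left h3 (Real.exp_pos _).le
    · have hFv : F v = fun _ => 0 := by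
        funext w
        simp [hF, Set.indicator_of_notMem hv]
      simp only [hFv]
      simp only [norm_zero, integral_zero]
      positivity
  have hswap := integral_integral_swap hFint
  -- LHS of swap
  have hlhs : (∫ v, ∫ w, F v w) = ∫ v in Ioi (0:ℝ), Real.exp (-v) • ∫ w in Ioi v, h w := by
    have h1 : ∀ v, (∫ w, F v w)
        = (Ioi (0:ℝ)).indicator (fun v => Real.exp (-v) • ∫ w in Ioi v, h w) v := by
      intro v
      by_cases hv : v ∈ Ioi (0:ℝ)
      · rw [Set.indicator_of_mem hv]
        have h2 : F v = fun w => Real.exp (-v) • (Ioi v).indicator h w := by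
          funext w
          simp only [hF]
          rw [Set.indicator_of_mem hv]
        rw [h2, integral_smul, integral_indicator measurableSet_Ioi]
      · rw [Set.indicator_of_notMem hv]
        have h2 : F v = fun _ => 0 := by
          funext w
          simp [hF, Set.indicator_of_notMem hv]
        rw [h2]
        simp
    rw [show (fun v => ∫ w, F v w)
        = (Ioi (0:ℝ)).indicator (fun v => Real.exp (-v) • ∫ w in Ioi v, h w) from funext h1]
    exact integral_indicator measurableSet_Ioi
  -- RHS of swap
  have hrhs : (∫ w, ∫ v, F v w)
      = (∫ w in Ioi (0:ℝ), h w) - ∫ w in Ioi (0:ℝ), Real.exp (-w) • h w := by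
    have h1 : ∀ w, (∫ v, F v w) = (∫ v in Ioo (0:ℝ) w, Real.exp (-v)) • h w := by
      intro w
      have heq : (fun v => F v w) = (Ioo (0:ℝ) w).indicator (fun v => Real.exp (-v) • h w) := by
        funext v
        by_cases h1 : 0 < v
        · by_cases h2 : v < w
          · simp only [hF]
            rw [Set.indicator_of_mem (show v ∈ Ioo (0:ℝ) w from ⟨h1, h2⟩),
              Set.indicator_of_mem (show v ∈ Ioi (0:ℝ) from h1),
              Set.indicator_of_mem (show w ∈ Ioi v from h2)]
          · simp only [hF]
            rw [Set.indicator_of_notMem (show v ∉ Ioo (0:ℝ) w from fun hm => h2 hm.2),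
              Set.indicator_of_notMem (show w ∉ Ioi v from fun hw => h2 hw), smul_zero]
        · simp only [hF]
          rw [Set.indicator_of_notMem (show v ∉ Ioo (0:ℝ) w from fun hm => h1 hm.1),
            Set.indicator_of_notMem (show v ∉ Ioi (0:ℝ) from fun hv => h1 hv), zero_smul]
      rw [heq, integral_indicator measurableSet_Ioo, integral_smul_const]
    rw [show (fun w => ∫ v, F v w)
        = fun w => (∫ v in Ioo (0:ℝ) w, Real.exp (-v)) • h w from funext h1]
    have hzero : ∀ w ∉ Ioi (0:ℝ), ((∫ v in Ioo (0:ℝ) w, Real.exp (-v)) • h w) = 0 := by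
      intro w hw
      have : Ioo (0:ℝ) w = ∅ := Ioo_eq_empty (by simpa using hw)
      simp [this]
    rw [← setIntegral_eq_integral_of_forall_compl_eq_zero hzero]
    have hval : ∀ w ∈ Ioi (0:ℝ),
        ((∫ v in Ioo (0:ℝ) w, Real.exp (-v)) • h w) = h w - Real.exp (-w) • h w := by
      intro w hw
      have hw0 : (0:ℝ) ≤ w := le_of_lt (by simpa using hw)
      have hint1 : ∫ v in Ioo (0:ℝ) w, Real.exp (-v) = 1 - Real.exp (-w) := by
        rw [← integral_Ioc_eq_integral_Ioo, ← intervalIntegral.integral_of_le hw0]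
        rw [intervalIntegral.integral_comp_neg fun v => Real.exp v]
        rw [integral_exp]
        simp
      rw [hint1, sub_smul, one_smul]
    rw [setIntegral_congr_fun measurableSet_Ioi hval]
    have hi2 : IntegrableOn (fun w => Real.exp (-w) • h w) (Ioi (0:ℝ)) := by
      refine Integrable.mono hint
        (((Real.continuous_exp.comp continuous_neg).smul hc).aestronglyMeasurable.restrict) ?_
      filter_upwards [ae_restrict_mem measurableSet_Ioi] with w hw
      rw [norm_smul, Real.norm_eq_abs, Real.abs_exp]
      nth_rewrite 2 [show ‖h w‖ = 1 * ‖h w‖ by ring]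
      exact mul_le_mul_of_nonneg_right
        (Real.exp_le_one_iff.mpr (by simpa using le_of_lt hw)) (norm_nonneg _)
    exact integral_sub hint hi2
  rw [← hlhs, hswap, hrhs]

/-- `𝓙(Φ + 𝓘Φ) = 𝓘Φ`, i.e. `𝓙 ∘ (I + 𝓘) = 𝓘` on Lévy exponents. -/
theorem Jcal_add_self_Ical (Φ : ℝ → ℂ) (hΦc : Continuous Φ) (hΦ0 : Φ 0 = 0)
    (hI : ∀ y : ℝ, IntegrableOn (fun s => Φ (Real.exp (-s) * y)) (Set.Ioi 0))
    (hJ : ∀ y : ℝ, IntervalIntegrable (fun s => Φ (s * y)) volume 0 1)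
    (hJI : ∀ y : ℝ, IntervalIntegrable (fun s => Ical Φ (s * y)) volume 0 1) :
    ∀ y : ℝ, Jcal (fun z => Φ z + Ical Φ z) y = Ical Φ y := by
  intro y
  set h : ℝ → ℂ := fun w => Φ (Real.exp (-w) * y) with hh
  have hc : Continuous h :=
    hΦc.comp ((Real.continuous_exp.comp continuous_neg).mul continuous_const)
  have hint : IntegrableOn h (Ioi 0) := hI y
  have hIcal : ∀ v : ℝ, Ical Φ (Real.exp (-v) * y) = ∫ w in Ioi v, h w := by
    intro v
    have key : (fun s => Φ (Real.exp (-s) * (Real.exp (-v) * y))) = fun s => h (s + v) := by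
      funext s
      rw [hh]
      congr 1
      rw [← mul_assoc, ← Real.exp_add]
      ring_nf
    calc Ical Φ (Real.exp (-v) * y)
        = ∫ s in Ioi (0:ℝ), Φ (Real.exp (-s) * (Real.exp (-v) * y)) := rfl
      _ = ∫ s in Ioi (0:ℝ), h (s + v) := by rw [key]
      _ = ∫ w in Ioi v, h w := shift_Ioi h v
  have e1 : ∫ s in (0:ℝ)..1, Φ (s * y) = ∫ v in Ioi (0:ℝ), Real.exp (-v) • h v := by
    rw [subst_exp_neg (fun s => Φ (s * y))]
  have e2 : ∫ s in (0:ℝ)..1, Ical Φ (s * y)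
      = ∫ v in Ioi (0:ℝ), Real.exp (-v) • ∫ w in Ioi v, h w := by
    rw [subst_exp_neg (fun s => Ical Φ (s * y))]
    congr 1
    funext v
    rw [hIcal v]
  have key := fubini_step h hc hint
  have hIy : Ical Φ y = ∫ w in Ioi (0:ℝ), h w := rfl
  show (∫ s in (0:ℝ)..1, (Φ (s * y) + Ical Φ (s * y))) = Ical Φ y
  rw [intervalIntegral.integral_add (hJ y) (hJI y), e1, e2, key, hIy]
  ring
end

section
/- Composition identity of random integral mappings on the level of Lévy exponents: for a Lévy exponent Φ (all integrals assumed absolutely convergent), ∫_0^1 (∫_0^∞ Φ(e^{-t}·sy) dt) ds = ∫_0^∞ Φ(e^{-s}y) d(s + e^{-s} − 1), i.e., (𝓙∘𝓘)Φ(y) = ∫_0^∞ Φ(e^{-s}y)(1 − e^{-s}) ds. -/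
open MeasureTheory

open Set Filter in
/-- Composition identity `𝓙 ∘ 𝓘 = I^{e^{-s}, s+e^{-s}-1}_{(0,∞)}` on Lévy exponents:
`∫_0^1 (∫_0^∞ Φ(e^{-t} s y) dt) ds = ∫_0^∞ Φ(e^{-s} y) (1 - e^{-s}) ds`. -/
theorem Jcal_comp_Ical (Φ : ℝ → ℂ) (hΦc : Continuous Φ) (hΦ0 : Φ 0 = 0)
    (hI : ∀ y : ℝ, IntegrableOn (fun s => Φ (Real.exp (-s) * y)) (Set.Ioi 0))
    (hJI : ∀ y : ℝ, IntervalIntegrable (fun s => Ical Φ (s * y)) volume 0 1)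
    (hT : ∀ y : ℝ, IntegrableOn
      (fun s => Φ (Real.exp (-s) * y) * ((1 : ℂ) - Real.exp (-s))) (Set.Ioi 0)) :
    ∀ y : ℝ, Jcal (Ical Φ) y
      = ∫ s in Set.Ioi (0 : ℝ), Φ (Real.exp (-s) * y) * ((1 : ℂ) - Real.exp (-s)) := by
  intro y
  set f : ℝ → ℂ := fun t => Φ (Real.exp (-t) * y) with hfdef
  have hfc : Continuous f := hΦc.comp (by continuity)
  have hfI : IntegrableOn f (Set.Ioi 0) := hI y
  set H0 : ℂ := ∫ t in Set.Ioi (0 : ℝ), f t with hH0def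
  set Hd : ℝ → ℂ := fun u => H0 - ∫ t in (0:ℝ)..u, f t with hHddef
  -- Step A : translation
  have stepA : ∀ u : ℝ, Ical Φ (Real.exp (-u) * y) = ∫ t in Set.Ioi u, f t := by
    intro u
    have hmp : MeasurePreserving (fun t : ℝ => t + u) volume volume :=
      measurePreserving_add_right volume u
    have hemb : MeasurableEmbedding (fun t : ℝ => t + u) :=
      (Homeomorph.addRight u).measurableEmbedding
    have h1 : ∫ t in (fun t : ℝ => t + u) ⁻¹' (Set.Ioi u), f (t + u)
        = ∫ t in Set.Ioi u, f t :=
      hmp.setIntegral_preimage_emb hemb f (Set.Ioi u)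
    have hpre : (fun t : ℝ => t + u) ⁻¹' (Set.Ioi u) = Set.Ioi 0 := by
      ext t; simp
    rw [hpre] at h1
    rw [← h1, Ical]
    refine setIntegral_congr_fun measurableSet_Ioi (fun t _ => ?_)
    simp only [hfdef]
    rw [← mul_assoc, ← Real.exp_add, neg_add]
  -- Hd agrees with the tail integral on [0, ∞)
  have stepH : ∀ u : ℝ, 0 ≤ u → Hd u = ∫ t in Set.Ioi u, f t := by
    intro u hu
    have hsplit : Set.Ioc 0 u ∪ Set.Ioi u = Set.Ioi (0:ℝ) := Set.Ioc_union_Ioi_eq_Ioi hu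
    have hdisj : Disjoint (Set.Ioc 0 u) (Set.Ioi u) := Set.Ioc_disjoint_Ioi le_rfl
    have h1 : IntegrableOn f (Set.Ioc 0 u) := hfI.mono_set Set.Ioc_subset_Ioi_self
    have h2 : IntegrableOn f (Set.Ioi u) := hfI.mono_set (Set.Ioi_subset_Ioi hu)
    have hsum := setIntegral_union hdisj measurableSet_Ioi h1 h2
    rw [hsplit] at hsum
    simp only [hHddef, intervalIntegral.integral_of_le hu, hH0def, hsum]
    ring
  -- derivative of the exponential substitution
  have hE : ∀ u : ℝ, HasDerivAt (fun u : ℝ => Real.exp (-u)) (-Real.exp (-u)) u := by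
    intro u
    simpa [Function.comp_def] using (Real.hasDerivAt_exp (-u)).comp u (hasDerivAt_neg u)
  have hinj : Set.InjOn (fun u : ℝ => Real.exp (-u)) (Set.Ioi 0) := fun a _ b _ h =>
    neg_injective (Real.exp_injective h)
  have himg : (fun u : ℝ => Real.exp (-u)) '' Set.Ioi 0 = Set.Ioo 0 1 := by
    ext x
    constructor
    · rintro ⟨u, hu, rfl⟩
      exact ⟨Real.exp_pos _, Real.exp_lt_one_iff.mpr (neg_neg_iff_pos.mpr hu)⟩
    · rintro ⟨hx0, hx1⟩
      exact ⟨-Real.log x, by simpa using Real.log_neg hx0 hx1,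
        by simp [Real.exp_log hx0]⟩
  have hderivW : ∀ u ∈ Set.Ioi (0:ℝ),
      HasDerivWithinAt (fun u : ℝ => Real.exp (-u)) (-Real.exp (-u)) (Set.Ioi 0) u :=
    fun u _ => (hE u).hasDerivWithinAt
  -- Step B : substitution s = e^{-u}
  have stepB : Jcal (Ical Φ) y
      = ∫ u in Set.Ioi (0:ℝ), Real.exp (-u) • Ical Φ (Real.exp (-u) * y) := by
    have hsub := integral_image_eq_integral_abs_deriv_smul measurableSet_Ioi hderivW hinj
      (fun s => Ical Φ (s * y))
    rw [himg] at hsub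
    rw [Jcal, intervalIntegral.integral_of_le zero_le_one,
      MeasureTheory.integral_Ioc_eq_integral_Ioo, hsub]
    refine setIntegral_congr_fun measurableSet_Ioi (fun u _ => ?_)
    rw [abs_neg, abs_of_pos (Real.exp_pos _)]
  -- integrability of the substituted integrand
  have hint1 : IntegrableOn (fun u => Real.exp (-u) • Hd u) (Set.Ioi 0) := by
    have hJ : IntegrableOn (fun s => Ical Φ (s * y)) (Set.Ioo 0 1) :=
      ((intervalIntegrable_iff_integrableOn_Ioc_of_le zero_le_one).mp (hJI y)).mono_set
        Set.Ioo_subset_Ioc_self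
    rw [← himg] at hJ
    have h := (integrableOn_image_iff_integrableOn_abs_deriv_smul measurableSet_Ioi hderivW hinj
      (fun s => Ical Φ (s * y))).mp hJ
    refine h.congr_fun (fun u hu => ?_) measurableSet_Ioi
    dsimp only
    rw [abs_neg, abs_of_pos (Real.exp_pos _), stepA u, ← stepH u (le_of_lt hu)]
  have hint2 : IntegrableOn (fun u => (1 - Real.exp (-u)) • f u) (Set.Ioi 0) := by
    refine (hT y).congr_fun (fun u _ => ?_) measurableSet_Ioi
    simp only [hfdef]
    rw [Complex.real_smul, mul_comm]
    push_cast
    ring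
  -- derivative of Hd
  have hHdderiv : ∀ u : ℝ, HasDerivAt Hd (-f u) u := by
    intro u
    have h1 : HasDerivAt (fun u => ∫ t in (0:ℝ)..u, f t) (f u) u :=
      intervalIntegral.integral_hasDerivAt_right (hfc.intervalIntegrable 0 u)
        (hfc.stronglyMeasurable.stronglyMeasurableAtFilter) hfc.continuousAt
    exact ((hasDerivAt_const u H0).sub h1).congr_deriv (by simp)
  -- the FTC function g
  set g : ℝ → ℂ := fun u => (1 - Real.exp (-u)) • Hd u with hgdef
  have hgderiv : ∀ u : ℝ,
      HasDerivAt g ((1 - Real.exp (-u)) • (-f u) + Real.exp (-u) • Hd u) u := by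
    intro u
    have hc : HasDerivAt (fun u : ℝ => 1 - Real.exp (-u)) (Real.exp (-u)) u := by
      exact ((hasDerivAt_const u (1:ℝ)).sub (hE u)).congr_deriv (by simp)
    exact hc.smul (hHdderiv u)
  have hHdlim : Tendsto Hd atTop (nhds 0) := by
    have h1 := intervalIntegral_tendsto_integral_Ioi 0 hfI tendsto_id
    have h2 : Tendsto Hd atTop (nhds (H0 - H0)) := tendsto_const_nhds.sub h1
    simpa using h2
  have hglim : Tendsto g atTop (nhds 0) := by
    have h1 : Tendsto (fun u : ℝ => 1 - Real.exp (-u)) atTop (nhds 1) := by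
      simpa using tendsto_const_nhds.sub (Real.tendsto_exp_neg_atTop_nhds_zero)
    simpa only [one_smul, smul_zero] using h1.smul hHdlim
  have g'int : IntegrableOn
      (fun u => (1 - Real.exp (-u)) • (-f u) + Real.exp (-u) • Hd u) (Set.Ioi 0) :=
    (MeasureTheory.IntegrableOn.congr_fun hint2.neg (fun u _ => by simp) measurableSet_Ioi).add hint1
  have key : (∫ u in Set.Ioi (0:ℝ),
      ((1 - Real.exp (-u)) • (-f u) + Real.exp (-u) • Hd u)) = 0 := by
    have h := integral_Ioi_of_hasDerivAt_of_tendsto' (fun x _ => hgderiv x) g'int hglim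
    rw [h, hgdef]
    simp
  rw [integral_add
    (MeasureTheory.IntegrableOn.congr_fun hint2.neg (fun u _ => by simp) measurableSet_Ioi) hint1] at key
  have hneg : ∫ u in Set.Ioi (0:ℝ), (1 - Real.exp (-u)) • (-f u)
      = -∫ u in Set.Ioi (0:ℝ), (1 - Real.exp (-u)) • f u := by
    rw [← integral_neg]
    refine setIntegral_congr_fun measurableSet_Ioi (fun u _ => ?_)
    simp
  rw [hneg] at key
  have hfin : (∫ u in Set.Ioi (0:ℝ), Real.exp (-u) • Hd u)
      = ∫ u in Set.Ioi (0:ℝ), (1 - Real.exp (-u)) • f u := by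
    linear_combination key
  rw [stepB]
  have e1 : (∫ u in Set.Ioi (0:ℝ), Real.exp (-u) • Ical Φ (Real.exp (-u) * y))
      = ∫ u in Set.Ioi (0:ℝ), Real.exp (-u) • Hd u := by
    refine setIntegral_congr_fun measurableSet_Ioi (fun u hu => ?_)
    rw [stepA u, ← stepH u (le_of_lt hu)]
  rw [e1, hfin]
  refine setIntegral_congr_fun measurableSet_Ioi (fun u _ => ?_)
  simp only [hfdef]
  rw [Complex.real_smul, mul_comm]
  push_cast
  ring
end
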